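/- Let β₀ be the 1-periodic step function with β₀(t) = 1 for t ∈ [0, 1/2) and β₀(t) = −1 for t ∈ [1/2, 1), and R_sβ₀ the translate u ↦ β₀(u + s). Then: (a) the family {R_tβ₀ : t ∈ [0, 1/2)} is linearly independent in the vector space of functions ℝ → ℝ; and (b) every 1-periodic, right-continuous, S¹-odd function γ : ℝ → ℝ that is locally constant on ℝ ∖ (F + ℤ) for some finite set F ⊆ [0,1) can be written as a finite linear combination γ = Σ_j ξ_j · R_{t_j}β₀ with distinct t_j ∈ [0, 1/2) and ξ_j ∈ ℝ. -/

import Mathlib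

/-- The set `F + ℤ = {f + k : f ∈ F, k ∈ ℤ}` of integer translates of points of `F`. -/
def BreaksSet (F : Set ℝ) : Set ℝ := {x : ℝ | ∃ f ∈ F, ∃ k : ℤ, x = f + k}

/-- The 1-periodic step function equal to `1` on `[0, 1/2) + ℤ` and `-1` on `[1/2, 1) + ℤ`. -/
noncomputable def stepLoop : ℝ → ℝ := fun t => if Int.fract t < 1/2 then 1 else -1

lemma stepLoop_eval {x : ℝ} (hx0 : 0 ≤ x) (hx1 : x < 1) :
    stepLoop x = if x < 1/2 then 1 else -1 := by
  unfold stepLoop; rw [Int.fract_eq_self.2 ⟨hx0, hx1⟩]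

lemma stepLoop_add_int (x : ℝ) (k : ℤ) : stepLoop (x + k) = stepLoop x := by
  unfold stepLoop; rw [Int.fract_add_intCast]

lemma stepLoop_add_half (x : ℝ) : stepLoop (x + 1/2) = - stepLoop x := by
  have h0 := Int.fract_nonneg x
  have h1 := Int.fract_lt_one x
  unfold stepLoop
  rcases lt_or_ge (Int.fract x) (1/2) with h | h
  · have key : Int.fract (x + 1/2) = Int.fract x + 1/2 := by
      have h2 : x + 1/2 = (Int.fract x + 1/2) + (⌊x⌋ : ℝ) := by
        linarith [Int.floor_add_fract x]
      rw [h2]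
      rw [show ((⌊x⌋ : ℝ)) = ((⌊x⌋ : ℤ) : ℝ) by norm_num,
        Int.fract_add_intCast, Int.fract_eq_self.2 ⟨by linarith, by linarith⟩]
    rw [if_pos h, key, if_neg (by linarith)]
  · have key : Int.fract (x + 1/2) = Int.fract x - 1/2 := by
      have h2 : x + 1/2 = (Int.fract x - 1/2) + ((⌊x⌋ + 1 : ℤ) : ℝ) := by
        push_cast; linarith [Int.floor_add_fract x]
      rw [h2, Int.fract_add_intCast, Int.fract_eq_self.2 ⟨by linarith, by linarith⟩]
    rw [if_neg (not_lt.2 h), key, if_pos (by linarith)]; ring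

lemma finite_pos_sep {B : Set ℝ} (hB : B.Finite) (x : ℝ) :
    ∃ η > 0, ∀ y ∈ B, y ≠ x → ¬ |y - x| < η := by
  have hC : IsClosed (B \ {x}) := ((hB.diff).isClosed)
  have hx : x ∈ (B \ {x})ᶜ := by simp
  obtain ⟨η, hη, hball⟩ := Metric.isOpen_iff.1 hC.isOpen_compl x hx
  refine ⟨η, hη, fun y hy hyx hlt => ?_⟩
  exact (hball (by rwa [Metric.mem_ball, Real.dist_eq])) ⟨hy, hyx⟩

lemma breaks_inter_finite {F : Set ℝ} (hF : F.Finite) (a b : ℝ) :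
    (BreaksSet F ∩ Set.Icc a b).Finite := by
  have hsub : BreaksSet F ∩ Set.Icc a b ⊆
      ⋃ f ∈ F, (fun k : ℤ => f + (k : ℝ)) '' {k : ℤ | (k : ℝ) ∈ Set.Icc (a - f) (b - f)} := by
    rintro x ⟨⟨f, hf, k, rfl⟩, hx⟩
    rw [Set.mem_Icc] at hx
    refine Set.mem_biUnion hf ⟨k, ?_, rfl⟩
    rw [Set.mem_setOf_eq, Set.mem_Icc]
    exact ⟨by linarith [hx.1], by linarith [hx.2]⟩
  refine Set.Finite.subset (Set.Finite.biUnion hF fun f _ => Set.Finite.image _ ?_) hsub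
  apply Set.Finite.subset (Set.finite_Icc (⌈a - f⌉) (⌊b - f⌋))
  intro k hk
  rw [Set.mem_setOf_eq, Set.mem_Icc] at hk
  rw [Set.mem_Icc]
  exact ⟨Int.ceil_le.2 hk.1, Int.le_floor.2 hk.2⟩

lemma loc_const_interval {γ : ℝ → ℝ} {F : Set ℝ}
    (hloc : ∀ x ∉ BreaksSet F, ∃ ε : ℝ, 0 < ε ∧
      ∀ y : ℝ, |y - x| < ε → y ∉ BreaksSet F → γ y = γ x)
    {a b : ℝ} (hfree : ∀ y, a < y → y < b → y ∉ BreaksSet F)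
    {x y : ℝ} (hx : x ∈ Set.Ioo a b) (hy : y ∈ Set.Ioo a b) : γ y = γ x := by
  have hopen : ∀ z ∈ Set.Ioo a b, ∃ ε > 0, Metric.ball z ε ⊆ Set.Ioo a b ∧
      ∀ w ∈ Metric.ball z ε, γ w = γ z := by
    intro z hz
    obtain ⟨ε₁, hε₁, hcl⟩ := hloc z (hfree z hz.1 hz.2)
    refine ⟨min ε₁ (min (z - a) (b - z)),
      lt_min hε₁ (lt_min (by linarith [hz.1]) (by linarith [hz.2])), ?_, ?_⟩
    · intro w hw
      rw [Metric.mem_ball, Real.dist_eq] at hw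
      have h1 := abs_lt.1 (lt_of_lt_of_le hw (le_trans (min_le_right _ _) (min_le_left _ _)))
      have h2 := abs_lt.1 (lt_of_lt_of_le hw (le_trans (min_le_right _ _) (min_le_right _ _)))
      exact ⟨by linarith, by linarith⟩
    · intro w hw
      rw [Metric.mem_ball, Real.dist_eq] at hw
      have h1 := abs_lt.1 (lt_of_lt_of_le hw (le_trans (min_le_right _ _) (min_le_left _ _)))
      have h2 := abs_lt.1 (lt_of_lt_of_le hw (le_trans (min_le_right _ _) (min_le_right _ _)))
      exact hcl w (lt_of_lt_of_le hw (min_le_left _ _)) (hfree w (by linarith) (by linarith))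
  set U : Set ℝ := {z | ∃ ε > 0, Metric.ball z ε ⊆ Set.Ioo a b ∧
      (∀ w ∈ Metric.ball z ε, γ w = γ z) ∧ γ z = γ x} with hU
  set V : Set ℝ := {z | ∃ ε > 0, Metric.ball z ε ⊆ Set.Ioo a b ∧
      (∀ w ∈ Metric.ball z ε, γ w = γ z) ∧ γ z ≠ γ x} with hV
  have hUopen : IsOpen U := by
    rw [Metric.isOpen_iff]
    rintro z ⟨ε, hε, hball, hcst, hval⟩
    refine ⟨ε, hε, fun w hw => ?_⟩
    obtain ⟨ε', hε', hball', hcst'⟩ := hopen w (hball hw)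
    refine ⟨min ε' (ε - dist w z), lt_min hε' (by rw [Metric.mem_ball] at hw; linarith), ?_, ?_, ?_⟩
    · exact fun p hp => hball' (Metric.ball_subset_ball (min_le_left _ _) hp)
    · exact fun p hp => hcst' p (Metric.ball_subset_ball (min_le_left _ _) hp)
    · rw [hcst w hw, hval]
  have hVopen : IsOpen V := by
    rw [Metric.isOpen_iff]
    rintro z ⟨ε, hε, hball, hcst, hval⟩
    refine ⟨ε, hε, fun w hw => ?_⟩
    obtain ⟨ε', hε', hball', hcst'⟩ := hopen w (hball hw)
    refine ⟨min ε' (ε - dist w z), lt_min hε' (by rw [Metric.mem_ball] at hw; linarith), ?_, ?_, ?_⟩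
    · exact fun p hp => hball' (Metric.ball_subset_ball (min_le_left _ _) hp)
    · exact fun p hp => hcst' p (Metric.ball_subset_ball (min_le_left _ _) hp)
    · rw [hcst w hw]; exact hval
  have hdisj : Disjoint U V := by
    rw [Set.disjoint_left]
    rintro z ⟨_, _, _, _, h1⟩ ⟨_, _, _, _, h2⟩
    exact h2 h1
  have hcover : Set.Ioo a b ⊆ U ∪ V := by
    intro z hz
    obtain ⟨ε, hε, hball, hcst⟩ := hopen z hz
    by_cases hval : γ z = γ x
    · exact Or.inl ⟨ε, hε, hball, hcst, hval⟩
    · exact Or.inr ⟨ε, hε, hball, hcst, hval⟩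
  rcases (isPreconnected_Ioo (a := a) (b := b)).subset_or_subset hUopen hVopen hdisj hcover
    with hsub | hsub
  · obtain ⟨_, _, _, _, h⟩ := hsub hy
    exact h
  · obtain ⟨_, _, _, _, h⟩ := hsub hx
    exact absurd rfl h
/-- (a) The translates `{R_tβ₀ : t ∈ [0, 1/2)}` are linearly independent in
the vector space of functions `ℝ → ℝ`.  (b) Every 1-periodic, right-continuous, S¹-odd
function that is locally constant off `F + ℤ` for some finite `F ⊆ [0,1)` is a finite
linear combination `Σ_j ξ_j · R_{t_j}β₀` with distinct `t_j ∈ [0, 1/2)`. -/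
theorem stmt19 :
    LinearIndependent ℝ
      (fun s : Set.Ico (0:ℝ) (1/2) => fun u : ℝ => stepLoop (u + (s : ℝ))) ∧
    (∀ γ : ℝ → ℝ, (∀ u, γ (u + 1) = γ u) →
      (∀ u, ContinuousWithinAt γ (Set.Ici u) u) →
      (∀ u, γ u + γ (u + 1/2) = 0) →
      (∃ F : Set ℝ, F.Finite ∧ F ⊆ Set.Ico 0 1 ∧
        ∀ x ∉ BreaksSet F, ∃ ε : ℝ, 0 < ε ∧
          ∀ y : ℝ, |y - x| < ε → y ∉ BreaksSet F → γ y = γ x) →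
      ∃ (m : ℕ) (ts ξ : Fin m → ℝ), Function.Injective ts ∧
        (∀ j, ts j ∈ Set.Ico (0:ℝ) (1/2)) ∧
        γ = fun u => ∑ j, ξ j * stepLoop (u + ts j)) := by
  constructor
  · -- Part (a): linear independence
    rw [linearIndependent_iff']
    intro s g hsum i₀ hi₀
    have hi₀1 : (0:ℝ) ≤ (i₀ : ℝ) := i₀.2.1
    have hi₀2 : (i₀ : ℝ) < 1/2 := i₀.2.2
    set x₀ : ℝ := 1/2 - (i₀ : ℝ) with hx₀def
    have hx₀pos : 0 < x₀ := by simp only [hx₀def]; linarith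
    -- choose ε
    set E : Finset ℝ := insert x₀ ((s.erase i₀).image fun i : Set.Ico (0:ℝ) (1/2) => |(i:ℝ) - (i₀:ℝ)|) with hE
    have hEne : E.Nonempty := ⟨x₀, Finset.mem_insert_self _ _⟩
    have hEpos : ∀ e ∈ E, 0 < e := by
      intro e he
      rcases Finset.mem_insert.1 he with h | h
      · exact h ▸ hx₀pos
      · obtain ⟨i, hi, rfl⟩ := Finset.mem_image.1 h
        have hne : (i:ℝ) ≠ (i₀:ℝ) := fun h => (Finset.mem_erase.1 hi).1 (Subtype.ext h)
        exact abs_pos.2 (sub_ne_zero.2 hne)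
    set ε : ℝ := E.min' hEne / 2 with hεdef
    have hminpos : 0 < E.min' hEne := hEpos _ (E.min'_mem hEne)
    have hεpos : 0 < ε := by positivity
    have hεlt : ∀ e ∈ E, ε < e := by
      intro e he
      have := E.min'_le e he
      simp only [hεdef]; linarith
    have hεx₀ : ε < x₀ := hεlt _ (Finset.mem_insert_self _ _)
    have h1 := congrFun hsum x₀
    have h2 := congrFun hsum (x₀ - ε)
    simp only [Finset.sum_apply, Pi.smul_apply, smul_eq_mul, Pi.zero_apply] at h1 h2
    have h3 : ∑ i ∈ s, g i * (stepLoop (x₀ + (i:ℝ)) - stepLoop (x₀ - ε + (i:ℝ))) = 0 := by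
      simp only [mul_sub, Finset.sum_sub_distrib, h1, h2, sub_zero]
    have key : ∀ x : ℝ, 0 < x → x ≤ 1/2 → ∀ i : Set.Ico (0:ℝ) (1/2),
        stepLoop (x + (i:ℝ)) = if x + (i:ℝ) < 1/2 then 1 else -1 := by
      intro x hx1 hx2 i
      exact stepLoop_eval (by have := i.2.1; linarith) (by have := i.2.2; linarith)
    have h4 : ∑ i ∈ s, g i * (stepLoop (x₀ + (i:ℝ)) - stepLoop (x₀ - ε + (i:ℝ)))
        = g i₀ * (stepLoop (x₀ + (i₀:ℝ)) - stepLoop (x₀ - ε + (i₀:ℝ))) := by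
      apply Finset.sum_eq_single_of_mem i₀ hi₀
      · intro i hi hne
        have hd : ε < |(i:ℝ) - (i₀:ℝ)| := hεlt _ (Finset.mem_insert_of_mem
          (Finset.mem_image_of_mem _ (Finset.mem_erase.2 ⟨hne, hi⟩)))
        rw [key x₀ hx₀pos (by simp only [hx₀def]; linarith),
          key (x₀ - ε) (by linarith) (by linarith)]
        have hcne : (i:ℝ) ≠ (i₀:ℝ) := fun h => hne (Subtype.ext h)
        rcases lt_or_gt_of_ne hcne with h | h
        · rw [if_pos (by simp only [hx₀def]; linarith), if_pos (by simp only [hx₀def]; linarith)]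
          ring
        · have : ε < (i:ℝ) - (i₀:ℝ) := lt_of_lt_of_le hd (le_of_eq (abs_of_pos (by linarith)))
          rw [if_neg (by simp only [hx₀def]; push_neg; linarith),
            if_neg (by simp only [hx₀def]; push_neg; linarith)]
          ring
    have h5 : stepLoop (x₀ + (i₀:ℝ)) - stepLoop (x₀ - ε + (i₀:ℝ)) = -2 := by
      rw [key x₀ hx₀pos (by simp only [hx₀def]; linarith),
        key (x₀ - ε) (by linarith) (by linarith)]
      have e1 : ¬ (x₀ + (i₀:ℝ) < 1/2) := by simp only [hx₀def]; linarith
      have e2 : x₀ - ε + (i₀:ℝ) < 1/2 := by simp only [hx₀def]; linarith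
      rw [if_neg e1, if_pos e2]; ring
    rw [h4, h5] at h3
    linarith
  · -- Part (b): representation
    rintro γ hper hrc hodd ⟨F, hFfin, hFsub, hloc⟩
    -- isolation of break points
    have hiso : ∀ x : ℝ, ∃ η, 0 < η ∧ ∀ y ∈ BreaksSet F, y ≠ x → ¬ |y - x| < η := by
      intro x
      obtain ⟨η, hη, h⟩ := finite_pos_sep (breaks_inter_finite hFfin (x - 1) (x + 1)) x
      refine ⟨min η 1, lt_min hη one_pos, fun y hy hyx hlt => ?_⟩
      have h1 : |y - x| < η := lt_of_lt_of_le hlt (min_le_left _ _)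
      have h2 := abs_lt.1 (lt_of_lt_of_le hlt (min_le_right _ _))
      exact h y ⟨hy, Set.mem_Icc.2 ⟨by linarith, by linarith⟩⟩ hyx h1
    -- right constancy
    have hright : ∀ x : ℝ, ∃ η, 0 < η ∧ ∀ y, x ≤ y → y < x + η → γ y = γ x := by
      intro x
      obtain ⟨η, hη, hx⟩ := hiso x
      have hfree : ∀ y, x < y → y < x + η → y ∉ BreaksSet F := by
        intro y h1 h2 hyB
        exact hx y hyB (ne_of_gt h1) (by rw [abs_of_pos (by linarith)]; linarith)
      have hmid : x + η/2 ∈ Set.Ioo x (x + η) := ⟨by linarith, by linarith⟩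
      have hc : ∀ y ∈ Set.Ioo x (x + η), γ y = γ (x + η/2) :=
        fun y hy => loc_const_interval hloc hfree hmid hy
      have hlim : Filter.Tendsto γ (nhdsWithin x (Set.Ioi x)) (nhds (γ x)) :=
        (hrc x).mono_left (nhdsWithin_mono x Set.Ioi_subset_Ici_self)
      have heq : γ =ᶠ[nhdsWithin x (Set.Ioi x)] fun _ => γ (x + η/2) :=
        Filter.eventuallyEq_of_mem (Ioo_mem_nhdsGT_of_mem ⟨le_refl x, by linarith⟩) hc
      have hlim2 : Filter.Tendsto γ (nhdsWithin x (Set.Ioi x)) (nhds (γ (x + η/2))) :=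
        Filter.Tendsto.congr' heq.symm tendsto_const_nhds
      have hxval : γ x = γ (x + η/2) := tendsto_nhds_unique hlim hlim2
      refine ⟨η, hη, fun y h1 h2 => ?_⟩
      rcases eq_or_lt_of_le h1 with rfl | h1'
      · rfl
      · rw [hc y ⟨h1', h2⟩, ← hxval]
    -- left constancy
    have hleft : ∀ x : ℝ, ∃ η, 0 < η ∧ ∃ c, ∀ y, x - η < y → y < x → γ y = c := by
      intro x
      obtain ⟨η, hη, hx⟩ := hiso x
      have hfree : ∀ y, x - η < y → y < x → y ∉ BreaksSet F := fun y h1 h2 hyB =>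
        hx y hyB (ne_of_lt h2) (by rw [abs_of_neg (by linarith)]; linarith)
      exact ⟨η, hη, γ (x - η/2), fun y h1 h2 =>
        loc_const_interval hloc hfree ⟨by linarith, by linarith⟩ ⟨h1, h2⟩⟩
    -- two-sided constancy off breaks
    have hconst2 : ∀ x ∉ BreaksSet F, ∃ η, 0 < η ∧ ∀ y, |y - x| < η → γ y = γ x := by
      intro x hxB
      obtain ⟨η, hη, hx⟩ := hiso x
      have hfree : ∀ y, x - η < y → y < x + η → y ∉ BreaksSet F := by
        intro y h1 h2 hyB
        by_cases hyx : y = x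
        · exact hxB (hyx ▸ hyB)
        · exact hx y hyB hyx (abs_lt.2 ⟨by linarith, by linarith⟩)
      refine ⟨η, hη, fun y hy => ?_⟩
      have h := abs_lt.1 hy
      exact loc_const_interval hloc hfree ⟨by linarith, by linarith⟩
        ⟨by linarith [h.1], by linarith [h.2]⟩
    choose ηR hR using hright
    choose ηL hηL L hL using hleft
    -- the finite break set inside (0, 1/2)
    have hSfin : (F ∩ Set.Ioo 0 (1/2) : Set ℝ).Finite := hFfin.inter_of_left _
    set S : Finset ℝ := hSfin.toFinset with hSdef
    have hSmem : ∀ d, d ∈ S ↔ d ∈ F ∧ 0 < d ∧ d < 1/2 := by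
      intro d
      rw [hSdef, Set.Finite.mem_toFinset]
      constructor
      · rintro ⟨h1, h2⟩; exact ⟨h1, (Set.mem_Ioo.1 h2).1, (Set.mem_Ioo.1 h2).2⟩
      · rintro ⟨h1, h2, h3⟩; exact ⟨h1, Set.mem_Ioo.2 ⟨h2, h3⟩⟩
    have hSB : ∀ d ∈ S, d ∈ BreaksSet F := by
      intro d hd
      exact ⟨d, ((hSmem d).1 hd).1, 0, by push_cast; ring⟩
    have hBS : ∀ x ∈ BreaksSet F, 0 < x → x < 1/2 → x ∈ S := by
      rintro x ⟨f, hf, k, rfl⟩ h1 h2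
      have hf1 := hFsub hf
      rw [Set.mem_Ico] at hf1
      have hk : k = 0 := by
        have h3 : (-1 : ℝ) < (k : ℝ) := by linarith [hf1.2]
        have h4 : (k : ℝ) < 1 := by linarith [hf1.1]
        have h3' : (-1 : ℤ) < k := by exact_mod_cast h3
        have h4' : k < (1 : ℤ) := by exact_mod_cast h4
        omega
      subst hk
      rw [hSmem]
      push_cast
      push_cast at h1 h2
      exact ⟨by simpa using hf, by simpa using h1, by simpa using h2⟩
    set J : ℝ → ℝ := fun d => γ d - L d with hJdef
    set φ : ℝ → ℝ := fun u => γ u - ∑ d ∈ S, J d * (if d ≤ u then (1:ℝ) else 0) with hφdef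
    -- φ is locally constant to the right everywhere
    have hφright : ∀ x : ℝ, ∃ η, 0 < η ∧ ∀ y, x ≤ y → y < x + η → φ y = φ x := by
      intro x
      obtain ⟨η₀, hη₀, hx0⟩ := hiso x
      refine ⟨min η₀ (ηR x), lt_min hη₀ (hR x).1, fun y h1 h2 => ?_⟩
      have hγ : γ y = γ x := (hR x).2 y h1 (lt_of_lt_of_le h2 (by
        have := min_le_right η₀ (ηR x); linarith))
      have hsum : ∀ d ∈ S, J d * (if d ≤ y then (1:ℝ) else 0)
          = J d * (if d ≤ x then 1 else 0) := by
        intro d hd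
        by_cases hdx : d ≤ x
        · rw [if_pos hdx, if_pos (le_trans hdx h1)]
        · push_neg at hdx
          have hyd : y < d := by
            by_contra hc
            push_neg at hc
            refine hx0 d (hSB d hd) (ne_of_gt hdx) ?_
            rw [abs_of_pos (by linarith)]
            have := min_le_left η₀ (ηR x); linarith
          rw [if_neg (not_le.2 hyd), if_neg (not_le.2 hdx)]
      simp only [hφdef]
      rw [hγ, Finset.sum_congr rfl hsum]
    -- φ is locally constant at every point of (0, 1/2)
    have hφconst : ∀ x : ℝ, 0 < x → x < 1/2 →
        ∃ η, 0 < η ∧ ∀ y, |y - x| < η → φ y = φ x := by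
      intro x hx1 hx2
      obtain ⟨η₀, hη₀, hx0⟩ := hiso x
      by_cases hxB : x ∈ BreaksSet F
      · have hxS : x ∈ S := hBS x hxB hx1 hx2
        set η : ℝ := min η₀ (min (ηR x) (ηL x)) with hηdef
        have hη : 0 < η := lt_min hη₀ (lt_min (hR x).1 (hηL x))
        have hηa : η ≤ η₀ := min_le_left _ _
        have hηb : η ≤ ηR x := le_trans (min_le_right _ _) (min_le_left _ _)
        have hηc : η ≤ ηL x := le_trans (min_le_right _ _) (min_le_right _ _)
        refine ⟨η, hη, fun y hy => ?_⟩
        have hyl := abs_lt.1 hy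
        have hsep : ∀ d ∈ S, d ≠ x → (if d ≤ y then (1:ℝ) else 0) = (if d ≤ x then 1 else 0) := by
          intro d hd hdx
          have habs := hx0 d (hSB d hd) hdx
          rcases lt_or_gt_of_ne hdx with h | h
          · have hd0 : d ≤ x - η₀ := by
              by_contra hc; push_neg at hc
              exact habs (abs_lt.2 ⟨by linarith, by linarith⟩)
            rw [if_pos (le_of_lt h), if_pos (by linarith [hyl.1])]
          · have hd0 : x + η₀ ≤ d := by
              by_contra hc; push_neg at hc
              exact habs (abs_lt.2 ⟨by linarith, by linarith⟩)
            rw [if_neg (not_le.2 (by linarith [hyl.2])), if_neg (not_le.2 h)]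
        have hsplit : ∀ u : ℝ, ∑ d ∈ S, J d * (if d ≤ u then (1:ℝ) else 0)
            = J x * (if x ≤ u then 1 else 0) + ∑ d ∈ S.erase x, J d * (if d ≤ u then 1 else 0) :=
          fun u => (Finset.add_sum_erase S (fun d => J d * (if d ≤ u then (1:ℝ) else 0)) hxS).symm
        have hereq : ∑ d ∈ S.erase x, J d * (if d ≤ y then (1:ℝ) else 0)
            = ∑ d ∈ S.erase x, J d * (if d ≤ x then 1 else 0) := by
          refine Finset.sum_congr rfl fun d hd => ?_
          rw [hsep d (Finset.mem_of_mem_erase hd) (Finset.ne_of_mem_erase hd)]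
        rcases le_or_gt x y with hxy | hyx
        · have hγ : γ y = γ x := (hR x).2 y hxy (by linarith [hyl.2])
          simp only [hφdef]
          rw [hγ, hsplit y, hsplit x, hereq, if_pos hxy, if_pos (le_refl x)]
        · have hγ : γ y = L x := hL x y (by linarith [hyl.1]) hyx
          simp only [hφdef]
          rw [hγ, hsplit y, hsplit x, hereq, if_neg (not_le.2 hyx), if_pos (le_refl x)]
          simp only [hJdef]
          ring
      · obtain ⟨η₁, hη₁, hv⟩ := hconst2 x hxB
        refine ⟨min η₀ η₁, lt_min hη₀ hη₁, fun y hy => ?_⟩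
        have hyl := abs_lt.1 hy
        have hmin1 := min_le_left η₀ η₁
        have hmin2 := min_le_right η₀ η₁
        have hγ : γ y = γ x := hv y (lt_of_lt_of_le hy hmin2)
        have hxS : x ∉ S := fun h => hxB (hSB x h)
        have hsum : ∀ d ∈ S, J d * (if d ≤ y then (1:ℝ) else 0)
            = J d * (if d ≤ x then 1 else 0) := by
          intro d hd
          have hdx : d ≠ x := fun h => hxS (h ▸ hd)
          have habs := hx0 d (hSB d hd) hdx
          rcases lt_or_gt_of_ne hdx with h | h
          · have hd0 : d ≤ x - η₀ := by
              by_contra hc; push_neg at hc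
              exact habs (abs_lt.2 ⟨by linarith, by linarith⟩)
            rw [if_pos (le_of_lt h), if_pos (by linarith [hyl.1])]
          · have hd0 : x + η₀ ≤ d := by
              by_contra hc; push_neg at hc
              exact habs (abs_lt.2 ⟨by linarith, by linarith⟩)
            rw [if_neg (not_le.2 (by linarith [hyl.2])), if_neg (not_le.2 h)]
        simp only [hφdef]
        rw [hγ, Finset.sum_congr rfl hsum]
    -- φ is constant on [0, 1/2)
    have hφ0 : ∀ u, 0 ≤ u → u < 1/2 → φ u = φ 0 := by
      intro u hu1 hu2
      obtain ⟨η₁, hη₁, hru⟩ := hφright u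
      set δ : ℝ := min η₁ (1/2 - u) with hδ
      have hδpos : 0 < δ := lt_min hη₁ (by linarith)
      have hδa : δ ≤ η₁ := min_le_left _ _
      have hδb : δ ≤ 1/2 - u := min_le_right _ _
      set u' : ℝ := u + δ/2 with hu'def
      have huu' : u < u' := by simp only [hu'def]; linarith
      have hu'h : u' < 1/2 := by simp only [hu'def]; linarith
      have hφu' : φ u' = φ u := hru u' (le_of_lt huu') (by simp only [hu'def]; linarith)
      have hcont : ContinuousOn φ (Set.Icc 0 u') := by
        intro z hz
        rw [Set.mem_Icc] at hz
        rcases eq_or_lt_of_le hz.1 with hz0 | hz1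
        · subst hz0
          obtain ⟨η, hη, hr⟩ := hφright 0
          have hmem : Set.Ico (0:ℝ) η ∈ nhdsWithin 0 (Set.Icc 0 u') :=
            nhdsWithin_mono 0 Set.Icc_subset_Ici_self (Ico_mem_nhdsGE_of_mem ⟨le_refl _, hη⟩)
          have hten : Filter.Tendsto (fun _ : ℝ => φ 0) (nhdsWithin 0 (Set.Icc 0 u'))
              (nhds (φ 0)) := tendsto_const_nhds
          exact hten.congr' (Filter.eventuallyEq_of_mem hmem fun y hy =>
            (hr y hy.1 (by simpa using hy.2)).symm)
        · have hca : ContinuousAt φ z := by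
            obtain ⟨η, hη, hc⟩ := hφconst z hz1 (lt_of_le_of_lt hz.2 hu'h)
            refine Filter.EventuallyEq.continuousAt (y := φ z) ?_
            refine Metric.eventually_nhds_iff.2 ⟨η, hη, fun y hy => ?_⟩
            exact hc y (by rwa [Real.dist_eq] at hy)
          exact hca.continuousWithinAt
      have hderiv : ∀ z ∈ Set.Ico 0 u', HasDerivWithinAt φ 0 (Set.Ici z) z := by
        intro z hz
        obtain ⟨η, hη, hr⟩ := hφright z
        refine HasDerivWithinAt.congr_of_eventuallyEq
          (hasDerivWithinAt_const z (Set.Ici z) (φ z)) ?_ rfl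
        filter_upwards [Ico_mem_nhdsGE_of_mem ⟨le_refl z, lt_add_of_pos_right z hη⟩] with y hy
        exact hr y hy.1 hy.2
      have hfin := constant_of_has_deriv_right_zero hcont hderiv u'
        (Set.mem_Icc.2 ⟨by linarith, le_refl _⟩)
      linarith [hφu', hfin]
    have hφ0v : φ 0 = γ 0 := by
      simp only [hφdef]
      rw [Finset.sum_eq_zero, sub_zero]
      intro d hd
      rw [if_neg (not_le.2 (((hSmem d).1 hd).2.1)), mul_zero]
    have hγformula : ∀ u, 0 ≤ u → u < 1/2 →
        γ u = γ 0 + ∑ d ∈ S, J d * (if d ≤ u then (1:ℝ) else 0) := by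
      intro u h1 h2
      have h := hφ0 u h1 h2
      rw [hφ0v] at h
      simp only [hφdef] at h
      linarith [h]
    -- the translate set and coefficients
    set T : Finset ℝ := insert 0 (S.image fun d => 1/2 - d) with hTdef
    set ξ' : ℝ → ℝ := fun t => if t = 0 then γ 0 + ∑ d ∈ S, J d / 2 else -(J (1/2 - t)) / 2
      with hξdef
    have hTmem : ∀ t ∈ T, 0 ≤ t ∧ t < 1/2 := by
      intro t ht
      rcases Finset.mem_insert.1 ht with rfl | h
      · exact ⟨le_refl _, by norm_num⟩
      · obtain ⟨d, hd, rfl⟩ := Finset.mem_image.1 h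
        have hm := (hSmem d).1 hd
        exact ⟨by linarith [hm.2.2], by linarith [hm.2.1]⟩
    have h0T : (0:ℝ) ∉ S.image (fun d => 1/2 - d) := by
      intro h
      obtain ⟨d, hd, hh⟩ := Finset.mem_image.1 h
      have hm := (hSmem d).1 hd
      linarith [hm.2.2]
    have hsum_eval : ∀ u, 0 ≤ u → u < 1/2 → ∑ t ∈ T, ξ' t * stepLoop (u + t) = γ u := by
      intro u h1 h2
      rw [hTdef, Finset.sum_insert h0T,
        Finset.sum_image (fun a _ b _ hab => by linarith [hab] : ∀ a ∈ S, ∀ b ∈ S,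
          (fun d => 1/2 - d) a = (fun d => 1/2 - d) b → a = b)]
      have e0 : stepLoop (u + 0) = 1 := by
        rw [add_zero, stepLoop_eval h1 (by linarith), if_pos h2]
      have eterm : ∀ d ∈ S, ξ' (1/2 - d) * stepLoop (u + (1/2 - d))
          = J d * (if d ≤ u then (1:ℝ) else 0) - J d / 2 := by
        intro d hd
        have hm := (hSmem d).1 hd
        have hne : (1/2 : ℝ) - d ≠ 0 := ne_of_gt (by linarith [hm.2.2])
        have harg : (1/2 : ℝ) - (1/2 - d) = d := by ring
        have hs : stepLoop (u + (1/2 - d)) = if u + (1/2 - d) < 1/2 then 1 else -1 :=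
          stepLoop_eval (by linarith [hm.2.2]) (by linarith [hm.2.1])
        simp only [hξdef]
        rw [if_neg hne, harg, hs]
        by_cases hdu : d ≤ u
        · rw [if_neg (by push_neg; linarith), if_pos hdu]; ring
        · push_neg at hdu
          rw [if_pos (by linarith), if_neg (not_le.2 hdu)]; ring
      rw [Finset.sum_congr rfl eterm, hγformula u h1 h2, e0, Finset.sum_sub_distrib]
      simp only [hξdef]
      rw [if_pos trivial]
      ring
    -- periodicity reductions
    have hγper : ∀ (u : ℝ), γ u = γ (Int.fract u) := by
      intro u
      have hP : Function.Periodic γ 1 := hper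
      have := hP.sub_int_mul_eq (x := u) ⌊u⌋
      rw [mul_one, Int.self_sub_floor] at this
      exact this.symm
    have hstep_shift : ∀ u t : ℝ, stepLoop (u + t) = stepLoop (Int.fract u + t) := by
      intro u t
      have : u + t = (Int.fract u + t) + (⌊u⌋ : ℝ) := by
        rw [Int.fract]; ring
      rw [this]
      exact_mod_cast stepLoop_add_int (Int.fract u + t) ⌊u⌋
    have hfinal : ∀ u : ℝ, ∑ t ∈ T, ξ' t * stepLoop (u + t) = γ u := by
      intro u
      set v : ℝ := Int.fract u with hvdef
      have hv1 : 0 ≤ v := Int.fract_nonneg u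
      have hv2 : v < 1 := Int.fract_lt_one u
      have hsv : ∑ t ∈ T, ξ' t * stepLoop (u + t) = ∑ t ∈ T, ξ' t * stepLoop (v + t) :=
        Finset.sum_congr rfl fun t _ => by rw [hstep_shift u t]
      rw [hsv, hγper u]
      rcases lt_or_ge v (1/2) with h | h
      · exact hsum_eval v hv1 h
      · have hw1 : 0 ≤ v - 1/2 := by linarith
        have hw2 : v - 1/2 < 1/2 := by linarith
        have hγw : γ v = - γ (v - 1/2) := by
          have := hodd (v - 1/2)
          rw [show v - 1/2 + 1/2 = v by ring] at this
          linarith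
        have hsw : ∑ t ∈ T, ξ' t * stepLoop (v + t)
            = - ∑ t ∈ T, ξ' t * stepLoop ((v - 1/2) + t) := by
          rw [← Finset.sum_neg_distrib]
          refine Finset.sum_congr rfl fun t _ => ?_
          rw [show v + t = ((v - 1/2) + t) + 1/2 by ring, stepLoop_add_half]
          ring
        rw [hsw, hsum_eval (v - 1/2) hw1 hw2, hγw]
    -- package into Fin
    refine ⟨T.card, fun j => ((T.equivFin.symm j : T) : ℝ),
      fun j => ξ' ((T.equivFin.symm j : T) : ℝ), ?_, ?_, ?_⟩
    · intro a b hab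
      exact T.equivFin.symm.injective (Subtype.ext hab)
    · intro j
      have := hTmem _ (T.equivFin.symm j).2
      exact Set.mem_Ico.2 ⟨this.1, this.2⟩
    · funext u
      rw [← hfinal u, ← Finset.sum_coe_sort T (fun t => ξ' t * stepLoop (u + t))]
      exact (Equiv.sum_comp T.equivFin.symm
        (fun t : T => ξ' (t : ℝ) * stepLoop (u + (t : ℝ)))).symm
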